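/- Let G = (V, E) be a finite acyclic digraph and let (V1, E1), (V2, E2) be a separation of G along a pair {u, v} of distinct vertices. If u dominates v in G and v has no incoming edge in E2 (that is, v is a source of H2), then for all vertices x, y ∈ V1, x dominates y in H1 = (V1, E1) if and only if x dominates y in G. -/

import Mathlib

/-- `x` dominates `y` in the digraph with edge set `E`: there is a directed
path with at least one edge from `x` to `y`. -/
def Dominates {α : Type*} (E : Finset (α × α)) (x y : α) : Prop :=
  Relation.TransGen (fun a b => (a, b) ∈ E) x y

/-- A separation of the finite digraph `(V, E)` along the pair `{u, v}` of
distinct vertices into `H1 = (V1, E1)` and `H2 = (V2, E2)`. -/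
structure Separation {α : Type*} [DecidableEq α] (V : Finset α) (E : Finset (α × α))
    (u v : α) (V1 V2 : Finset α) (E1 E2 : Finset (α × α)) : Prop where
  ne : u ≠ v
  vUnion : V1 ∪ V2 = V
  vInter : V1 ∩ V2 = {u, v}
  eDisjoint : Disjoint E1 E2
  eUnion : E1 ∪ E2 = E
  mem1 : ∀ e ∈ E1, e.1 ∈ V1 ∧ e.2 ∈ V1
  mem2 : ∀ e ∈ E2, e.1 ∈ V2 ∧ e.2 ∈ V2

/-- If `G` is acyclic, `u` dominates `v` in `G` and `v` is a source of `H2`,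
then dominance on `V1` is the same in `H1` as in `G`. -/
theorem stmt2 {α : Type*} [DecidableEq α] (V V1 V2 : Finset α)
    (E E1 E2 : Finset (α × α)) (u v : α)
    (hsep : Separation V E u v V1 V2 E1 E2)
    (hacyc : ∀ x : α, ¬ Dominates E x x)
    (hdom : Dominates E u v)
    (hvsrc : ∀ e ∈ E2, e.2 ≠ v) :
    ∀ x ∈ V1, ∀ y ∈ V1, (Dominates E1 x y ↔ Dominates E x y) := by
  set R : α → α → Prop := fun a b => (a, b) ∈ E with hR
  set R1 : α → α → Prop := fun a b => (a, b) ∈ E1 with hR1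
  set R2 : α → α → Prop := fun a b => (a, b) ∈ E2 with hR2
  have hE1sub : ∀ {a b}, (a, b) ∈ E1 → (a, b) ∈ E := fun h =>
    hsep.eUnion ▸ Finset.mem_union_left _ h
  have hE2sub : ∀ {a b}, (a, b) ∈ E2 → (a, b) ∈ E := fun h =>
    hsep.eUnion ▸ Finset.mem_union_right _ h
  have hEcases : ∀ {a b}, (a, b) ∈ E → (a, b) ∈ E1 ∨ (a, b) ∈ E2 := by
    intro a b h
    have := hsep.eUnion ▸ h
    exact Finset.mem_union.mp this
  have huv : ∀ {w}, w ∈ V1 → w ∈ V2 → w = u ∨ w = v := by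
    intro w h1 h2
    have : w ∈ V1 ∩ V2 := Finset.mem_inter.mpr ⟨h1, h2⟩
    rw [hsep.vInter] at this
    simpa using this
  -- Lemma F: a reflexive-transitive R-path from b to a vertex of V1 either starts in V1
  -- or contains an initial nonempty R2-segment reaching u.
  have lemF : ∀ b y, Relation.ReflTransGen R b y → y ∈ V1 →
      b ∈ V1 ∨ Relation.TransGen R2 b u := by
    intro b y h hy
    induction h using Relation.ReflTransGen.head_induction_on with
    | refl => exact Or.inl hy
    | head hbc _ ih =>
      rename_i b' c _
      by_cases hb : b' ∈ V1
      · exact Or.inl hb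
      · have h2 : (b', c) ∈ E2 := by
          rcases hEcases hbc with h1 | h2
          · exact absurd (hsep.mem1 _ h1).1 hb
          · exact h2
        have hcV2 : c ∈ V2 := (hsep.mem2 _ h2).2
        have hcv : c ≠ v := hvsrc _ h2
        rcases ih with hc1 | hc2
        · have : c = u ∨ c = v := huv hc1 hcV2
          rcases this with rfl | rfl
          · exact Or.inr (Relation.TransGen.single h2)
          · exact absurd rfl hcv
        · exact Or.inr (Relation.TransGen.head h2 hc2)
  -- Lemma E: an E2-edge starting in V1, followed by a path back to V1, is impossible.
  have lemE : ∀ a b y, (a, b) ∈ E2 → a ∈ V1 → Relation.ReflTransGen R b y → y ∈ V1 → False := by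
    intro a b y hab ha hby hy
    have hau : Relation.TransGen R a u := by
      rcases lemF b y hby hy with hb1 | hb2
      · have hbV2 : b ∈ V2 := (hsep.mem2 _ hab).2
        have : b = u ∨ b = v := huv hb1 hbV2
        rcases this with rfl | rfl
        · exact Relation.TransGen.single (hE2sub hab)
        · exact absurd rfl (hvsrc _ hab)
      · exact Relation.TransGen.head (hE2sub hab)
          (Relation.TransGen.mono (fun _ _ h => hE2sub h) _ _ hb2)
    have haV2 : a ∈ V2 := (hsep.mem2 _ hab).1
    rcases huv ha haV2 with rfl | rfl
    · exact hacyc a hau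
    · exact hacyc u (hdom.trans hau)
  intro x hx y hy
  constructor
  · exact fun h => Relation.TransGen.mono (fun _ _ hh => hE1sub hh) _ _ h
  · intro h
    revert hx
    induction h using Relation.TransGen.head_induction_on with
    | single hxy =>
      rename_i x'
      intro hx
      rcases hEcases hxy with h1 | h2
      · exact Relation.TransGen.single h1
      · exact (lemE x' y y h2 hx Relation.ReflTransGen.refl hy).elim
    | head hxc hcy ih =>
      rename_i x' c
      intro hx
      rcases hEcases hxc with h1 | h2
      · exact Relation.TransGen.head h1 (ih ((hsep.mem1 _ h1).2))
      · exact (lemE x' c y h2 hx hcy.to_reflTransGen hy).elim
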